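/- Let V be a finite-dimensional real vector space. For a symmetric bilinear form L on V, define the 4-linear form R_L(x_1,x_2,x_3,x_4) := L(x_1,x_4) L(x_2,x_3) − L(x_1,x_3) L(x_2,x_4). Then the set {R_L : L a symmetric bilinear form on V} spans the vector space of all algebraic curvature tensors on V. -/

import Mathlib

/-- A 4-linear form on `V`. -/
def IsQuadrilinear {V : Type*} [AddCommGroup V] [Module ℝ V]
    (T : V → V → V → V → ℝ) : Prop :=
  (∀ (c : ℝ) (x x' y z w : V), T (c • x + x') y z w = c * T x y z w + T x' y z w) ∧
  (∀ (c : ℝ) (x y y' z w : V), T x (c • y + y') z w = c * T x y z w + T x y' z w) ∧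
  (∀ (c : ℝ) (x y z z' w : V), T x y (c • z + z') w = c * T x y z w + T x y z' w) ∧
  (∀ (c : ℝ) (x y z w w' : V), T x y z (c • w + w') = c * T x y z w + T x y z w')

/-- An algebraic curvature tensor on `V`: a 4-linear form satisfying
`R(x₁,x₂,x₃,x₄) = -R(x₂,x₁,x₃,x₄) = R(x₃,x₄,x₁,x₂)` and the first Bianchi identity. -/
def IsAlgCurvatureTensor {V : Type*} [AddCommGroup V] [Module ℝ V]
    (T : V → V → V → V → ℝ) : Prop :=
  IsQuadrilinear T ∧
  (∀ x₁ x₂ x₃ x₄ : V, T x₁ x₂ x₃ x₄ = -T x₂ x₁ x₃ x₄) ∧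
  (∀ x₁ x₂ x₃ x₄ : V, T x₁ x₂ x₃ x₄ = T x₃ x₄ x₁ x₂) ∧
  (∀ x₁ x₂ x₃ x₄ : V, T x₁ x₂ x₃ x₄ + T x₂ x₃ x₁ x₄ + T x₃ x₁ x₂ x₄ = 0)

/-- A symmetric bilinear form on `V`. -/
def IsSymmBilin {V : Type*} [AddCommGroup V] [Module ℝ V] (L : V → V → ℝ) : Prop :=
  (∀ (c : ℝ) (x x' y : V), L (c • x + x') y = c * L x y + L x' y) ∧
  (∀ (c : ℝ) (x y y' : V), L x (c • y + y') = c * L x y + L x y') ∧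
  (∀ x y : V, L x y = L y x)

section Aux

variable {V : Type*} [AddCommGroup V] [Module ℝ V]

/-- The polarized Kulkarni–Nomizu-type product of two bilinear forms. -/
def Sfun (φ ψ : V → V → ℝ) : V → V → V → V → ℝ := fun x y z w =>
  φ x w * ψ y z + ψ x w * φ y z - φ x z * ψ y w - ψ x z * φ y w

/-- The symmetrized product of two dual basis elements. -/
noncomputable def phiB {ι : Type*} (B : Module.Basis ι ℝ V) (a d : ι) : V → V → ℝ := fun x y =>
  B.repr x a * B.repr y d + B.repr x d * B.repr y a

variable {T : V → V → V → V → ℝ}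

lemma quad_zero₁ (h : IsQuadrilinear T) (y z w : V) : T 0 y z w = 0 := by
  have := h.1 1 0 0 y z w; simp at this; linarith

lemma quad_zero₂ (h : IsQuadrilinear T) (x z w : V) : T x 0 z w = 0 := by
  have := h.2.1 1 x 0 0 z w; simp at this; linarith

lemma quad_zero₃ (h : IsQuadrilinear T) (x y w : V) : T x y 0 w = 0 := by
  have := h.2.2.1 1 x y 0 0 w; simp at this; linarith

lemma quad_zero₄ (h : IsQuadrilinear T) (x y z : V) : T x y z 0 = 0 := by
  have := h.2.2.2 1 x y z 0 0; simp at this; linarith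

lemma quad_sum₁ (h : IsQuadrilinear T) {ι : Type*} (s : Finset ι) (c : ι → ℝ) (v : ι → V)
    (y z w : V) : T (∑ i ∈ s, c i • v i) y z w = ∑ i ∈ s, c i * T (v i) y z w := by
  classical
  induction s using Finset.induction with
  | empty => simpa using quad_zero₁ h y z w
  | @insert j s' hj ih =>
      rw [Finset.sum_insert hj, Finset.sum_insert hj, h.1, ih]

lemma quad_sum₂ (h : IsQuadrilinear T) {ι : Type*} (s : Finset ι) (c : ι → ℝ) (v : ι → V)
    (x z w : V) : T x (∑ i ∈ s, c i • v i) z w = ∑ i ∈ s, c i * T x (v i) z w := by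
  classical
  induction s using Finset.induction with
  | empty => simpa using quad_zero₂ h x z w
  | @insert j s' hj ih =>
      rw [Finset.sum_insert hj, Finset.sum_insert hj, h.2.1, ih]

lemma quad_sum₃ (h : IsQuadrilinear T) {ι : Type*} (s : Finset ι) (c : ι → ℝ) (v : ι → V)
    (x y w : V) : T x y (∑ i ∈ s, c i • v i) w = ∑ i ∈ s, c i * T x y (v i) w := by
  classical
  induction s using Finset.induction with
  | empty => simpa using quad_zero₃ h x y w
  | @insert j s' hj ih =>
      rw [Finset.sum_insert hj, Finset.sum_insert hj, h.2.2.1, ih]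

lemma quad_sum₄ (h : IsQuadrilinear T) {ι : Type*} (s : Finset ι) (c : ι → ℝ) (v : ι → V)
    (x y z : V) : T x y z (∑ i ∈ s, c i • v i) = ∑ i ∈ s, c i * T x y z (v i) := by
  classical
  induction s using Finset.induction with
  | empty => simpa using quad_zero₄ h x y z
  | @insert j s' hj ih =>
      rw [Finset.sum_insert hj, Finset.sum_insert hj, h.2.2.2, ih]

lemma quad_expand (h : IsQuadrilinear T) {ι : Type*} [Fintype ι] (B : Module.Basis ι ℝ V)
    (x y z w : V) :
    T x y z w = ∑ a, ∑ b, ∑ c, ∑ d,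
      B.repr x a * B.repr y b * B.repr z c * B.repr w d * T (B a) (B b) (B c) (B d) := by
  conv_lhs => rw [← B.sum_repr x]
  rw [quad_sum₁ h]
  refine Finset.sum_congr rfl fun a _ => ?_
  conv_lhs => rw [← B.sum_repr y, quad_sum₂ h]
  rw [Finset.mul_sum]
  refine Finset.sum_congr rfl fun b _ => ?_
  conv_lhs => rw [← B.sum_repr z, quad_sum₃ h]
  rw [Finset.mul_sum, Finset.mul_sum]
  refine Finset.sum_congr rfl fun c _ => ?_
  conv_lhs => rw [← B.sum_repr w, quad_sum₄ h]
  rw [Finset.mul_sum, Finset.mul_sum, Finset.mul_sum]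
  refine Finset.sum_congr rfl fun d _ => ?_
  ring

lemma phiB_symm {ι : Type*} (B : Module.Basis ι ℝ V) (a d : ι) : IsSymmBilin (phiB B a d) := by
  refine ⟨fun c x x' y => ?_, fun c x y y' => ?_, fun x y => ?_⟩ <;>
    simp [phiB, map_add, map_smul, Finsupp.add_apply, Finsupp.smul_apply, smul_eq_mul] <;> ring

lemma symmBilin_add {φ ψ : V → V → ℝ} (hφ : IsSymmBilin φ) (hψ : IsSymmBilin ψ) :
    IsSymmBilin (fun x y => φ x y + ψ x y) := by
  refine ⟨fun c x x' y => ?_, fun c x y y' => ?_, fun x y => ?_⟩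
  · beta_reduce; rw [hφ.1, hψ.1]; ring
  · beta_reduce; rw [hφ.2.1, hψ.2.1]; ring
  · beta_reduce; rw [hφ.2.2, hψ.2.2]

lemma Sfun_mem {φ ψ : V → V → ℝ} (hφ : IsSymmBilin φ) (hψ : IsSymmBilin ψ) :
    Sfun φ ψ ∈ Submodule.span ℝ
      { T : V → V → V → V → ℝ | ∃ L : V → V → ℝ, IsSymmBilin L ∧
          T = fun x₁ x₂ x₃ x₄ => L x₁ x₄ * L x₂ x₃ - L x₁ x₃ * L x₂ x₄ } := by
  have hdecomp : Sfun φ ψ =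
      (fun x₁ x₂ x₃ x₄ => (φ x₁ x₄ + ψ x₁ x₄) * (φ x₂ x₃ + ψ x₂ x₃)
        - (φ x₁ x₃ + ψ x₁ x₃) * (φ x₂ x₄ + ψ x₂ x₄))
      - (fun x₁ x₂ x₃ x₄ => φ x₁ x₄ * φ x₂ x₃ - φ x₁ x₃ * φ x₂ x₄)
      - (fun x₁ x₂ x₃ x₄ => ψ x₁ x₄ * ψ x₂ x₃ - ψ x₁ x₃ * ψ x₂ x₄) := by
    funext x y z w
    simp only [Sfun, Pi.sub_apply]
    ring
  rw [hdecomp]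
  refine sub_mem (sub_mem (Submodule.subset_span ?_) (Submodule.subset_span ?_))
    (Submodule.subset_span ?_)
  · exact ⟨fun x y => φ x y + ψ x y, symmBilin_add hφ hψ, rfl⟩
  · exact ⟨φ, hφ, rfl⟩
  · exact ⟨ψ, hψ, rfl⟩

lemma act_of_RL {L : V → V → ℝ} (hL : IsSymmBilin L) :
    IsAlgCurvatureTensor (fun x₁ x₂ x₃ x₄ => L x₁ x₄ * L x₂ x₃ - L x₁ x₃ * L x₂ x₄) := by
  obtain ⟨h1, h2, hs⟩ := hL
  refine ⟨⟨fun c x x' y z w => ?_, fun c x y y' z w => ?_, fun c x y z z' w => ?_,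
    fun c x y z w w' => ?_⟩, fun x y z w => ?_, fun x y z w => ?_, fun x y z w => ?_⟩
  · simp only [h1]; ring
  · simp only [h1]; ring
  · simp only [h2]; ring
  · simp only [h2]; ring
  · ring
  · linear_combination (-(L w x)) * hs z y - L y z * hs w x + L w y * hs z x + L x z * hs w y
  · linear_combination L y w * hs z x + L x w * hs y z + L z w * hs x y

lemma act_zero : IsAlgCurvatureTensor (0 : V → V → V → V → ℝ) := by
  refine ⟨⟨?_, ?_, ?_, ?_⟩, ?_, ?_, ?_⟩ <;> intros <;> simp

lemma act_add {T T' : V → V → V → V → ℝ} (hT : IsAlgCurvatureTensor T)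
    (hT' : IsAlgCurvatureTensor T') : IsAlgCurvatureTensor (T + T') := by
  obtain ⟨⟨a1, a2, a3, a4⟩, b1, b2, b3⟩ := hT
  obtain ⟨⟨a1', a2', a3', a4'⟩, b1', b2', b3'⟩ := hT'
  refine ⟨⟨fun c x x' y z w => ?_, fun c x y y' z w => ?_, fun c x y z z' w => ?_,
    fun c x y z w w' => ?_⟩, fun x y z w => ?_, fun x y z w => ?_, fun x y z w => ?_⟩ <;>
    simp only [Pi.add_apply]
  · rw [a1, a1']; ring
  · rw [a2, a2']; ring
  · rw [a3, a3']; ring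
  · rw [a4, a4']; ring
  · linarith [b1 x y z w, b1' x y z w]
  · linarith [b2 x y z w, b2' x y z w]
  · linarith [b3 x y z w, b3' x y z w]

lemma act_smul {T : V → V → V → V → ℝ} (c : ℝ) (hT : IsAlgCurvatureTensor T) :
    IsAlgCurvatureTensor (c • T) := by
  obtain ⟨⟨a1, a2, a3, a4⟩, b1, b2, b3⟩ := hT
  refine ⟨⟨fun r x x' y z w => ?_, fun r x y y' z w => ?_, fun r x y z z' w => ?_,
    fun r x y z w w' => ?_⟩, fun x y z w => ?_, fun x y z w => ?_, fun x y z w => ?_⟩ <;>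
    simp only [Pi.smul_apply, smul_eq_mul]
  · rw [a1]; ring
  · rw [a2]; ring
  · rw [a3]; ring
  · rw [a4]; ring
  · rw [b1 x y z w]; ring
  · rw [b2 x y z w]
  · linear_combination c * b3 x y z w

end Aux

/-- the tensors `R_L(x₁,x₂,x₃,x₄) = L(x₁,x₄)L(x₂,x₃) - L(x₁,x₃)L(x₂,x₄)`,
for `L` a symmetric bilinear form, span the space of all algebraic curvature tensors. -/
theorem span_of_R_L (V : Type*) [AddCommGroup V] [Module ℝ V] [FiniteDimensional ℝ V] :
    (Submodule.span ℝ
      { T : V → V → V → V → ℝ | ∃ L : V → V → ℝ, IsSymmBilin L ∧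
          T = fun x₁ x₂ x₃ x₄ => L x₁ x₄ * L x₂ x₃ - L x₁ x₃ * L x₂ x₄ } :
        Set (V → V → V → V → ℝ)) =
    { T : V → V → V → V → ℝ | IsAlgCurvatureTensor T } := by
  classical
  apply Set.Subset.antisymm
  · intro T hT
    induction hT using Submodule.span_induction with
    | mem T h =>
        obtain ⟨L, hL, rfl⟩ := h
        exact act_of_RL hL
    | zero => exact act_zero
    | add x y hx hy ihx ihy => exact act_add ihx ihy
    | smul c x hx ih => exact act_smul c ih
  · intro T hT
    obtain ⟨hq, h2, h3, h4⟩ := hT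
    set B : Module.Basis (Fin (Module.finrank ℝ V)) ℝ V := Module.finBasis ℝ V with hB
    have hlast : ∀ a b c d : V, T a b d c = -T a b c d := by
      intro a b c d
      rw [h3 a b d c, h2 d c a b, h3 c d a b]
    have exp : ∀ u v s t : V,
        (∑ a, ∑ b, ∑ c, ∑ d,
          B.repr u a * B.repr v b * B.repr s c * B.repr t d * T (B a) (B b) (B c) (B d))
          = T u v s t := fun u v s t => (quad_expand hq B u v s t).symm
    have key : ∀ x y z w : V,
        (∑ a, ∑ b, ∑ c, ∑ d,
          T (B a) (B b) (B c) (B d) * Sfun (phiB B a d) (phiB B b c) x y z w)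
        = 12 * T x y z w := by
      intro x y z w
      have comb :
          (∑ a, ∑ b, ∑ c, ∑ d, B.repr x a * B.repr y b * B.repr z c * B.repr w d * T (B a) (B b) (B c) (B d))
          + (∑ a, ∑ b, ∑ c, ∑ d, B.repr x a * B.repr z b * B.repr y c * B.repr w d * T (B a) (B b) (B c) (B d))
          + (∑ a, ∑ b, ∑ c, ∑ d, B.repr w a * B.repr y b * B.repr z c * B.repr x d * T (B a) (B b) (B c) (B d))
          + (∑ a, ∑ b, ∑ c, ∑ d, B.repr w a * B.repr z b * B.repr y c * B.repr x d * T (B a) (B b) (B c) (B d))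
          + (∑ a, ∑ b, ∑ c, ∑ d, B.repr y a * B.repr x b * B.repr w c * B.repr z d * T (B a) (B b) (B c) (B d))
          + (∑ a, ∑ b, ∑ c, ∑ d, B.repr z a * B.repr x b * B.repr w c * B.repr y d * T (B a) (B b) (B c) (B d))
          + (∑ a, ∑ b, ∑ c, ∑ d, B.repr y a * B.repr w b * B.repr x c * B.repr z d * T (B a) (B b) (B c) (B d))
          + (∑ a, ∑ b, ∑ c, ∑ d, B.repr z a * B.repr w b * B.repr x c * B.repr y d * T (B a) (B b) (B c) (B d))
          - (∑ a, ∑ b, ∑ c, ∑ d, B.repr x a * B.repr y b * B.repr w c * B.repr z d * T (B a) (B b) (B c) (B d))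
          - (∑ a, ∑ b, ∑ c, ∑ d, B.repr x a * B.repr w b * B.repr y c * B.repr z d * T (B a) (B b) (B c) (B d))
          - (∑ a, ∑ b, ∑ c, ∑ d, B.repr z a * B.repr y b * B.repr w c * B.repr x d * T (B a) (B b) (B c) (B d))
          - (∑ a, ∑ b, ∑ c, ∑ d, B.repr z a * B.repr w b * B.repr y c * B.repr x d * T (B a) (B b) (B c) (B d))
          - (∑ a, ∑ b, ∑ c, ∑ d, B.repr y a * B.repr x b * B.repr z c * B.repr w d * T (B a) (B b) (B c) (B d))
          - (∑ a, ∑ b, ∑ c, ∑ d, B.repr w a * B.repr x b * B.repr z c * B.repr y d * T (B a) (B b) (B c) (B d))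
          - (∑ a, ∑ b, ∑ c, ∑ d, B.repr y a * B.repr z b * B.repr x c * B.repr w d * T (B a) (B b) (B c) (B d))
          - (∑ a, ∑ b, ∑ c, ∑ d, B.repr w a * B.repr z b * B.repr x c * B.repr y d * T (B a) (B b) (B c) (B d))
          = ∑ a, ∑ b, ∑ c, ∑ d,
            T (B a) (B b) (B c) (B d) * Sfun (phiB B a d) (phiB B b c) x y z w := by
        simp only [← Finset.sum_add_distrib, ← Finset.sum_sub_distrib]
        refine Finset.sum_congr rfl fun a _ => Finset.sum_congr rfl fun b _ =>
          Finset.sum_congr rfl fun c _ => Finset.sum_congr rfl fun d _ => ?_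
        simp only [Sfun, phiB]
        ring
      rw [← comb]
      simp only [exp]
      linarith [hlast x z y w, hlast x y z w, hlast x w y z,
        h2 z x w y, h2 y x w z, h2 y x z w, h2 w x z y, h2 z x y w, h2 w z x y,
        h3 w y z x, h3 w z y x, h3 y w x z, h3 z w x y, h3 z y w x, h3 z w y x, h3 y z x w,
        h4 x y z w]
    have hrep : T = (1/12 : ℝ) •
        ∑ a, ∑ b, ∑ c, ∑ d,
          T (B a) (B b) (B c) (B d) • Sfun (phiB B a d) (phiB B b c) := by
      funext x y z w
      have k := key x y z w
      simp only [Pi.smul_apply, Finset.sum_apply, smul_eq_mul]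
      linarith [k]
    rw [hrep]
    refine Submodule.smul_mem _ _ (Submodule.sum_mem _ fun a _ => Submodule.sum_mem _ fun b _ =>
      Submodule.sum_mem _ fun c _ => Submodule.sum_mem _ fun d _ =>
        Submodule.smul_mem _ _ (Sfun_mem (phiB_symm B a d) (phiB_symm B b c)))
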